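/- Let J ⊆ {1,…,K} and let θ̃ ∈ ℝ^K be any vector satisfying θ̃_k = ln(μ_k/ν_k) for every k ∉ J and h_k(θ̃) = 0 for every k ∈ J. Then H_0(θ̃) = 0. -/

import Mathlib

open Matrix

/-- Lemma 2.4 (le:subspace): if `θ̃ = θ̃^{(J)}` satisfies `θ̃_k = ln(μ_k/ν_k)` for `k ∉ J`
and `h_k(θ̃) = 0` for `k ∈ J`, then `H₀(θ̃) = 0`, where
`H₀(θ) = Σ_k (e^{θ_k} − 1) λ_k + Σ_k h_k(θ) μ_k`,
`h_k(θ) = e^{−θ_k}(Σ_l (e^{θ_l} − 1) p_{kl} + 1) − 1`, and `ν = (I − Pᵀ)⁻¹ λ`. -/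
theorem stmt_7 {K : ℕ} (P : Matrix (Fin (K + 1)) (Fin (K + 1)) ℝ)
    (hP : ∀ k l, 0 ≤ P k l) (hProw : ∀ k, ∑ l, P k l ≤ 1)
    (hspec : ∀ z ∈ spectrum ℂ (P.map Complex.ofReal), ‖z‖ < 1)
    (lam mu : Fin (K + 1) → ℝ) (hlam : ∀ k, 0 < lam k) (hmu : ∀ k, 0 < mu k)
    (ν : Fin (K + 1) → ℝ)
    (hν : ν = ((1 : Matrix (Fin (K + 1)) (Fin (K + 1)) ℝ) - Pᵀ)⁻¹ *ᵥ lam)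
    (hνpos : ∀ k, 0 < ν k)
    (J : Finset (Fin (K + 1))) (θ : Fin (K + 1) → ℝ)
    (hout : ∀ k ∉ J, θ k = Real.log (mu k / ν k))
    (hin : ∀ k ∈ J,
      Real.exp (-θ k) * ((∑ l, (Real.exp (θ l) - 1) * P k l) + 1) - 1 = 0) :
    (∑ k, (Real.exp (θ k) - 1) * lam k)
      + ∑ k, (Real.exp (-θ k) * ((∑ l, (Real.exp (θ l) - 1) * P k l) + 1) - 1) * mu k
      = 0 := by
  -- Step 1: invertibility of 1 - P over ℂ, hence nonzero real determinant
  have hone : (1:ℂ) ∉ spectrum ℂ (P.map Complex.ofReal) := by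
    intro h
    have := hspec 1 h
    simp at this
  have hunitC : IsUnit ((1 : Matrix (Fin (K+1)) (Fin (K+1)) ℂ) - P.map Complex.ofReal) := by
    have := spectrum.notMem_iff.mp hone
    simpa using this
  have hdetC : ((1 : Matrix (Fin (K+1)) (Fin (K+1)) ℂ) - P.map Complex.ofReal).det ≠ 0 := by
    have := (Matrix.isUnit_iff_isUnit_det _).mp hunitC
    exact this.ne_zero
  have hmap : ((1 : Matrix (Fin (K+1)) (Fin (K+1)) ℝ) - P).map (Complex.ofRealHom)
      = (1 : Matrix (Fin (K+1)) (Fin (K+1)) ℂ) - P.map Complex.ofReal := by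
    ext i j
    simp [Matrix.map_apply, Matrix.sub_apply, Matrix.one_apply]
    split <;> simp
  have hdetR : ((1 : Matrix (Fin (K+1)) (Fin (K+1)) ℝ) - P).det ≠ 0 := by
    intro h
    apply hdetC
    rw [← hmap, ← RingHom.mapMatrix_apply, ← RingHom.map_det, h]
    simp
  set A : Matrix (Fin (K+1)) (Fin (K+1)) ℝ := (1 : Matrix (Fin (K+1)) (Fin (K+1)) ℝ) - Pᵀ with hA
  have hdetA : A.det ≠ 0 := by
    have : A = ((1 : Matrix (Fin (K+1)) (Fin (K+1)) ℝ) - P)ᵀ := by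
      rw [Matrix.transpose_sub, Matrix.transpose_one]
    rw [this, Matrix.det_transpose]
    exact hdetR
  have hlamν : lam = A *ᵥ ν := by
    rw [hν, Matrix.mulVec_mulVec, Matrix.mul_nonsing_inv _ (isUnit_iff_ne_zero.mpr hdetA), Matrix.one_mulVec]
  have hkey : ∀ l, ∑ k, P k l * ν k = ν l - lam l := by
    intro l
    have := congrFun hlamν l
    simp only [Matrix.mulVec, dotProduct, hA, Matrix.sub_apply, Matrix.one_apply,
      Matrix.transpose_apply, sub_mul, Finset.sum_sub_distrib] at this
    simp only [ite_mul, one_mul, zero_mul, Finset.sum_ite_eq, Finset.mem_univ,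
      if_true] at this
    linarith
  -- Step 2: pointwise rewriting of the h-terms
  have hstep : ∀ k, (Real.exp (-θ k) * ((∑ l, (Real.exp (θ l) - 1) * P k l) + 1) - 1) * mu k
      = ν k * (∑ l, (Real.exp (θ l) - 1) * P k l) - (Real.exp (θ k) - 1) * ν k := by
    intro k
    by_cases hk : k ∈ J
    · have h0 := hin k hk
      have hS : (∑ l, (Real.exp (θ l) - 1) * P k l) = Real.exp (θ k) - 1 := by
        have he : Real.exp (-θ k) ≠ 0 := Real.exp_ne_zero _
        have : Real.exp (-θ k) * ((∑ l, (Real.exp (θ l) - 1) * P k l) + 1) = 1 := by linarith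
        have h2 : (∑ l, (Real.exp (θ l) - 1) * P k l) + 1 = Real.exp (θ k) := by
          have := congrArg (fun x => Real.exp (θ k) * x) this
          simp only [mul_one] at this
          rw [← mul_assoc, ← Real.exp_add] at this
          simp at this
          linarith
        linarith
      rw [h0, hS]
      ring
    · have hθ := hout k hk
      have hμν : 0 < mu k / ν k := div_pos (hmu k) (hνpos k)
      have he1 : Real.exp (θ k) = mu k / ν k := by rw [hθ, Real.exp_log hμν]
      have he2 : Real.exp (-θ k) = ν k / mu k := by
        rw [Real.exp_neg, he1, inv_div]
      have hν0 : ν k ≠ 0 := (hνpos k).ne'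
      have hμ0 : mu k ≠ 0 := (hmu k).ne'
      set S := ∑ l, (Real.exp (θ l) - 1) * P k l with hS
      have e1 : ν k / mu k * (S + 1) * mu k = ν k * (S + 1) := by field_simp
      have e2 : mu k / ν k * ν k = mu k := div_mul_cancel₀ _ hν0
      rw [he1, he2, sub_mul, one_mul, e1, sub_mul, e2]
      ring
  rw [Finset.sum_congr rfl (fun k _ => hstep k)]
  -- Step 3: sum manipulation
  have hswap : ∑ k, ν k * (∑ l, (Real.exp (θ l) - 1) * P k l)
      = ∑ l, (Real.exp (θ l) - 1) * (ν l - lam l) := by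
    simp_rw [Finset.mul_sum]
    rw [Finset.sum_comm]
    refine Finset.sum_congr rfl (fun l _ => ?_)
    rw [← hkey l, Finset.mul_sum]
    refine Finset.sum_congr rfl (fun k _ => ?_)
    ring
  rw [Finset.sum_sub_distrib, hswap]
  rw [← Finset.sum_sub_distrib, ← Finset.sum_add_distrib]
  apply Finset.sum_eq_zero
  intro k _
  ring
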